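/- Let X∞^c := int(X) \ X∞ and suppose (u, v, w) is dual-feasible: u ≥ 0, ∇v·f ≤ u on X, w ≥ v + 1 ≥ 0 on X, w ≥ 0 on X, v ≥ 0 on ∂X, and assume the average exit time τ̄ := (1/λ(X))∫_{X∞^c} τ dλ is finite. Then ∫_X w dλ + u·τ̄·λ(X) ≥ λ(X∞^c). In particular if u = 0 then ∫_X w dλ ≥ λ(X∞^c), i.e., the cost of any feasible pair in the inner-approximation LP is at least the Lebesgue volume of the complement of the MPI set. -/

import Mathlib

open Set MeasureTheory

/-- If `g` is a.e.-strongly measurable w.r.t. `μ.restrict s` and `c ≤ g` pointwise on `s`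
(with `s` an arbitrary, possibly non-measurable, set), then `c ≤ g` a.e. w.r.t.
`μ.restrict s`. -/
lemma ae_restrict_const_le_of_forall_mem {α : Type*} [MeasurableSpace α] {μ : Measure α}
    {s : Set α} {g : α → ℝ} {c : ℝ}
    (hg : AEStronglyMeasurable g (μ.restrict s)) (h : ∀ x ∈ s, c ≤ g x) :
    ∀ᵐ x ∂(μ.restrict s), c ≤ g x := by
  obtain ⟨g', hg'm, hgg'⟩ := hg
  have h0 : (μ.restrict s) {x | g x ≠ g' x} = 0 := hgg'
  have h1 : ∀ᵐ x ∂(μ.restrict s), c ≤ g' x := by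
    rw [ae_iff]
    have hmeas : MeasurableSet {x | ¬ c ≤ g' x} := by
      have : {x | ¬ c ≤ g' x} = {x | g' x < c} := by ext x; simp [not_le]
      rw [this]
      exact measurableSet_lt hg'm.measurable measurable_const
    rw [Measure.restrict_apply hmeas]
    have hsub : {x | ¬ c ≤ g' x} ∩ s ⊆ {x | g x ≠ g' x} ∩ s := by
      rintro x ⟨hx1, hx2⟩
      refine ⟨fun he => hx1 (he ▸ h x hx2), hx2⟩
    have hle : μ ({x | ¬ c ≤ g' x} ∩ s) ≤ μ.restrict s {x | g x ≠ g' x} :=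
      le_trans (measure_mono hsub) (Measure.le_restrict_apply _ _)
    rw [h0] at hle
    exact le_antisymm hle (zero_le)
  filter_upwards [h1, hgg'] with x hx hx' using hx' ▸ hx

/-- If `(u,v,w)` is dual feasible and the average exit time
`τ̄ = λ(X)⁻¹ ∫_{X∞ᶜ} τ dλ` is finite, then `∫_X w dλ + u·τ̄·λ(X) ≥ λ(X∞ᶜ)`;
in particular, if `u = 0` then `∫_X w dλ ≥ λ(X∞ᶜ)`. -/
theorem dual_cost_bounds_complement_volume
    {n : ℕ} (X : Set (EuclideanSpace ℝ (Fin n))) (hX : IsCompact X)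
    (hXvol : 0 < volume X)
    (f : EuclideanSpace ℝ (Fin n) → EuclideanSpace ℝ (Fin n))
    (Kf : NNReal) (hf : LipschitzOnWith Kf f X)
    -- the flow of ẋ = f(x)
    (φ : EuclideanSpace ℝ (Fin n) → ℝ → EuclideanSpace ℝ (Fin n))
    (hφ0 : ∀ x, φ x 0 = x)
    (hφd : ∀ x t, HasDerivAt (φ x) (f (φ x t)) t)
    -- the MPI set, its complement and the exit time
    (Xinf : Set (EuclideanSpace ℝ (Fin n)))
    (hXinf : Xinf = {x₀ ∈ interior X | ∀ s ≥ (0 : ℝ), φ x₀ s ∈ interior X})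
    (Xinfc : Set (EuclideanSpace ℝ (Fin n))) (hXinfc : Xinfc = interior X \ Xinf)
    (τ : EuclideanSpace ℝ (Fin n) → ℝ)
    (hτ : ∀ y, τ y = sInf {s : ℝ | 0 ≤ s ∧ φ y s ∉ interior X})
    -- finite average exit time
    (hτint : IntegrableOn τ Xinfc volume)
    (τbar : ℝ)
    (hτbar : τbar = (volume X).toReal⁻¹ * ∫ x₀ in Xinfc, τ x₀)
    -- the dual feasible triple (u, v, w)
    (u : ℝ) (hu : 0 ≤ u)
    (v w : EuclideanSpace ℝ (Fin n) → ℝ)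
    (v' : EuclideanSpace ℝ (Fin n) → EuclideanSpace ℝ (Fin n) →L[ℝ] ℝ)
    (hv : ∀ x ∈ X, HasFDerivAt v (v' x) x)
    (hw : ContinuousOn w X)
    (hvf : ∀ x ∈ X, v' x (f x) ≤ u)
    (hw1 : ∀ x ∈ X, 0 ≤ v x + 1 ∧ v x + 1 ≤ w x)
    (hw0 : ∀ x ∈ X, 0 ≤ w x)
    (hvb : ∀ x ∈ frontier X, 0 ≤ v x) :
    (volume Xinfc).toReal ≤ (∫ x in X, w x) + u * τbar * (volume X).toReal ∧
    (u = 0 → (volume Xinfc).toReal ≤ ∫ x in X, w x) := by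
  have hXclosed : IsClosed X := hX.isClosed
  have hXmeas : MeasurableSet X := hXclosed.measurableSet
  have hXfin : volume X < ⊤ := hX.measure_lt_top
  have hsubX : Xinfc ⊆ X := by
    rw [hXinfc]
    exact fun x hx => interior_subset hx.1
  -- the key pointwise bound on Xinfc : 1 ≤ w x + u * τ x
  have key : ∀ x₀ ∈ Xinfc, 1 ≤ w x₀ + u * τ x₀ := by
    intro x₀ hx₀
    rw [hXinfc] at hx₀
    obtain ⟨hx₀int, hx₀not⟩ := hx₀
    have hexit : ∃ s, 0 ≤ s ∧ φ x₀ s ∉ interior X := by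
      by_contra hc
      push_neg at hc
      exact hx₀not (by rw [hXinf]; exact ⟨hx₀int, fun s hs => hc s hs⟩)
    have contφ : Continuous (φ x₀) :=
      continuous_iff_continuousAt.2 fun t => (hφd x₀ t).continuousAt
    set S : Set ℝ := {s : ℝ | 0 ≤ s ∧ φ x₀ s ∉ interior X} with hS
    have hSclosed : IsClosed S := by
      have : S = Ici 0 ∩ (φ x₀) ⁻¹' (interior X)ᶜ := by
        ext s; simp [hS, mem_Ici, mem_preimage]
      rw [this]
      exact isClosed_Ici.inter ((isClosed_compl_iff.2 isOpen_interior).preimage contφ)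
    obtain ⟨s₀, hs₀0, hs₀⟩ := hexit
    have hSne : S.Nonempty := ⟨s₀, hs₀0, hs₀⟩
    have hSbdd : BddBelow S := ⟨0, fun s hs => hs.1⟩
    have hmemS : sInf S ∈ S := hSclosed.csInf_mem hSne hSbdd
    set T : ℝ := τ x₀ with hTdef
    have hTS : T = sInf S := hτ x₀
    have hTmem : T ∈ S := hTS ▸ hmemS
    have hT0 : 0 < T := by
      rcases eq_or_lt_of_le hTmem.1 with h | h
      · exfalso
        have h2 := hTmem.2
        rw [← h, hφ0] at h2
        exact h2 hx₀int
      · exact h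
    have hin : ∀ s, 0 ≤ s → s < T → φ x₀ s ∈ interior X := by
      intro s hs0 hsT
      by_contra hc
      have : T ≤ s := hTS ▸ csInf_le hSbdd ⟨hs0, hc⟩
      linarith
    have hXT : φ x₀ T ∈ X := by
      have h1 : φ x₀ T ∈ closure (φ x₀ '' Ioo 0 T) := by
        refine contφ.continuousWithinAt.mem_closure_image ?_
        rw [closure_Ioo (ne_of_lt hT0)]
        exact ⟨le_of_lt hT0, le_refl T⟩
      have h2 : closure (φ x₀ '' Ioo 0 T) ⊆ X := by
        rw [← hXclosed.closure_eq]
        refine closure_mono ?_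
        rintro y ⟨s, hs, rfl⟩
        exact interior_subset (hin s (le_of_lt hs.1) hs.2)
      exact h2 h1
    have hfr : φ x₀ T ∈ frontier X := by
      rw [frontier, hXclosed.closure_eq]
      exact ⟨hXT, hTmem.2⟩
    have hmemX : ∀ s ∈ Icc (0:ℝ) T, φ x₀ s ∈ X := by
      intro s hs
      rcases lt_or_eq_of_le hs.2 with h | h
      · exact interior_subset (hin s hs.1 h)
      · rw [h]; exact hXT
    -- monotone function h(s) = u*s - v(φ x₀ s)
    set g : ℝ → ℝ := fun s => u * s - v (φ x₀ s) with hg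
    have hders : ∀ s ∈ Icc (0:ℝ) T,
        HasDerivAt g (u - v' (φ x₀ s) (f (φ x₀ s))) s := by
      intro s hs
      have h1 : HasDerivAt (fun r => v (φ x₀ r)) (v' (φ x₀ s) (f (φ x₀ s))) s :=
        (hv _ (hmemX s hs)).comp_hasDerivAt s (hφd x₀ s)
      have h2 : HasDerivAt (fun r : ℝ => u * r) u s := by
        simpa using (hasDerivAt_id s).const_mul u
      exact h2.sub h1
    have hmono : MonotoneOn g (Icc 0 T) := by
      refine monotoneOn_of_deriv_nonneg (convex_Icc 0 T)
        (fun s hs => (hders s hs).continuousAt.continuousWithinAt) ?_ ?_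
      · intro s hs
        rw [interior_Icc] at hs
        exact ((hders s ⟨le_of_lt hs.1, le_of_lt hs.2⟩).differentiableAt).differentiableWithinAt
      · intro s hs
        rw [interior_Icc] at hs
        have hs' : s ∈ Icc (0:ℝ) T := ⟨le_of_lt hs.1, le_of_lt hs.2⟩
        rw [(hders s hs').deriv]
        have := hvf _ (hmemX s hs')
        linarith
    have h0T : g 0 ≤ g T :=
      hmono ⟨le_refl 0, le_of_lt hT0⟩ ⟨le_of_lt hT0, le_refl T⟩ (le_of_lt hT0)
    have hvT : 0 ≤ v (φ x₀ T) := hvb _ hfr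
    have hvx₀ : -(u * T) ≤ v x₀ := by
      have : u * 0 - v (φ x₀ 0) ≤ u * T - v (φ x₀ T) := h0T
      rw [hφ0] at this
      linarith
    have hx₀X : x₀ ∈ X := interior_subset hx₀int
    have hw1' := (hw1 x₀ hx₀X).2
    linarith
  -- measurability / integrability facts
  have hwX : IntegrableOn w X volume := hw.integrableOn_compact hX
  have hνle : volume.restrict Xinfc ≤ volume.restrict X :=
    Measure.restrict_mono hsubX le_rfl
  have hwm : AEStronglyMeasurable w (volume.restrict Xinfc) :=
    (hw.aestronglyMeasurable hXmeas).mono_measure hνle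
  have hwint : IntegrableOn w Xinfc volume := hwX.mono_set hsubX
  have hfinc : volume Xinfc < ⊤ := lt_of_le_of_lt (measure_mono hsubX) hXfin
  have hgint : IntegrableOn (fun x => w x + u * τ x) Xinfc volume :=
    hwint.add (hτint.const_mul u)
  have hgm : AEStronglyMeasurable (fun x => w x + u * τ x) (volume.restrict Xinfc) :=
    hgint.aestronglyMeasurable
  have h1int : IntegrableOn (fun _ => (1:ℝ)) Xinfc volume := by
    rw [integrableOn_const_iff]
    exact Or.inr hfinc
  -- main integral chain
  have step1 : (volume Xinfc).toReal = ∫ _ in Xinfc, (1:ℝ) := by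
    rw [setIntegral_const]; simp [Measure.real]
  have step2 : (∫ _ in Xinfc, (1:ℝ)) ≤ ∫ x in Xinfc, (w x + u * τ x) :=
    integral_mono_ae h1int hgint (ae_restrict_const_le_of_forall_mem hgm key)
  have step3 : (∫ x in Xinfc, (w x + u * τ x))
      = (∫ x in Xinfc, w x) + u * ∫ x in Xinfc, τ x := by
    rw [integral_add hwint (hτint.const_mul u), integral_const_mul]
  have step4 : (∫ x in Xinfc, w x) ≤ ∫ x in X, w x := by
    refine setIntegral_mono_set hwX ?_ (HasSubset.Subset.eventuallyLE hsubX)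
    exact (ae_restrict_iff' hXmeas).2 (Filter.Eventually.of_forall (fun x hx => hw0 x hx))
  have hvolpos : 0 < (volume X).toReal := ENNReal.toReal_pos (ne_of_gt hXvol) (ne_of_lt hXfin)
  have hτbar' : u * τbar * (volume X).toReal = u * ∫ x in Xinfc, τ x := by
    rw [hτbar]; field_simp
  constructor
  · rw [hτbar']
    calc (volume Xinfc).toReal = ∫ _ in Xinfc, (1:ℝ) := step1
      _ ≤ ∫ x in Xinfc, (w x + u * τ x) := step2
      _ = (∫ x in Xinfc, w x) + u * ∫ x in Xinfc, τ x := step3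
      _ ≤ (∫ x in X, w x) + u * ∫ x in Xinfc, τ x := by linarith
  · intro hu0
    subst hu0
    calc (volume Xinfc).toReal = ∫ _ in Xinfc, (1:ℝ) := step1
      _ ≤ ∫ x in Xinfc, (w x + 0 * τ x) := step2
      _ = ∫ x in Xinfc, w x := by simp [step3]
      _ ≤ ∫ x in X, w x := step4
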